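/- For any invertible matrix S and positive definite matrices A, B, one has S* (A #_t B) S = (S* A S) #_t (S* B S) for all t in [0,1]. -/

import Mathlib

open Matrix
open scoped ComplexOrder

/-- Real power of a Hermitian matrix via its spectral decomposition
(junk value for non-Hermitian input). -/
noncomputable def mrpow {m : ℕ} (A : Matrix (Fin m) (Fin m) ℂ) (t : ℝ) : Matrix (Fin m) (Fin m) ℂ :=
  if h : A.IsHermitian then
    (h.eigenvectorUnitary : Matrix (Fin m) (Fin m) ℂ) *
      Matrix.diagonal (fun i => ((h.eigenvalues i ^ t : ℝ) : ℂ)) *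
      star (h.eigenvectorUnitary : Matrix (Fin m) (Fin m) ℂ)
  else A

/-- Weighted geometric mean  A #_t B = A^{1/2} (A^{-1/2} B A^{-1/2})^t A^{1/2}. -/
noncomputable def geomMean {m : ℕ} (t : ℝ) (A B : Matrix (Fin m) (Fin m) ℂ) :
    Matrix (Fin m) (Fin m) ℂ :=
  mrpow A (1/2) * mrpow (mrpow A (-(1/2)) * B * mrpow A (-(1/2))) t * mrpow A (1/2)

variable {m : ℕ}

lemma mrpow_eq_cfc {A : Matrix (Fin m) (Fin m) ℂ} (hA : A.IsHermitian) (t : ℝ) :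
    mrpow A t = cfc (fun x : ℝ => x ^ t) A := by
  rw [mrpow, dif_pos hA, hA.cfc_eq]
  rfl

lemma mrpow_isHermitian {A : Matrix (Fin m) (Fin m) ℂ} (hA : A.IsHermitian) (t : ℝ) :
    (mrpow A t).IsHermitian := by
  rw [mrpow_eq_cfc hA]
  exact cfc_predicate (fun x : ℝ => x ^ t) A

lemma mrpow_mul_mrpow {A : Matrix (Fin m) (Fin m) ℂ} (hA : A.PosDef) (s t : ℝ) :
    mrpow A s * mrpow A t = mrpow A (s + t) := by
  rw [mrpow, mrpow, mrpow, dif_pos hA.1, dif_pos hA.1, dif_pos hA.1]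
  have hV : star (hA.1.eigenvectorUnitary : Matrix (Fin m) (Fin m) ℂ) *
      (hA.1.eigenvectorUnitary : Matrix (Fin m) (Fin m) ℂ) = 1 :=
    mem_unitaryGroup_iff'.mp (SetLike.coe_mem _)
  simp only [mul_assoc]
  rw [← mul_assoc (star (hA.1.eigenvectorUnitary : Matrix (Fin m) (Fin m) ℂ)), hV, one_mul,
    ← mul_assoc, ← mul_assoc, mul_assoc _ (Matrix.diagonal _) (Matrix.diagonal _),
    diagonal_mul_diagonal]
  have hd : (fun i => ((hA.1.eigenvalues i ^ s : ℝ) : ℂ) * ((hA.1.eigenvalues i ^ t : ℝ) : ℂ))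
      = fun i => ((hA.1.eigenvalues i ^ (s + t) : ℝ) : ℂ) := by
    funext i
    rw [← Complex.ofReal_mul, ← Real.rpow_add (hA.eigenvalues_pos i)]
  rw [hd]
  simp only [mul_assoc]

lemma mrpow_zero {A : Matrix (Fin m) (Fin m) ℂ} (hA : A.IsHermitian) :
    mrpow A 0 = 1 := by
  rw [mrpow, dif_pos hA]
  simp only [Real.rpow_zero, Complex.ofReal_one, diagonal_one, mul_one]
  exact mem_unitaryGroup_iff.mp (SetLike.coe_mem _)

lemma mrpow_one {A : Matrix (Fin m) (Fin m) ℂ} (hA : A.IsHermitian) :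
    mrpow A 1 = A := by
  rw [mrpow, dif_pos hA]
  conv_rhs => rw [hA.spectral_theorem]
  have hd : (fun i => ((hA.eigenvalues i ^ (1:ℝ) : ℝ) : ℂ))
      = (RCLike.ofReal ∘ hA.eigenvalues : Fin m → ℂ) := by
    funext i; simp [Real.rpow_one]
  rw [hd]
  rfl

lemma posDef_conj {A S : Matrix (Fin m) (Fin m) ℂ} (hA : A.PosDef) (hS : IsUnit S) :
    (Sᴴ * A * S).PosDef := by
  exact hA.conjTranspose_mul_mul_same (mulVec_injective_of_isUnit hS)

noncomputable def unitaryConj (U : Matrix.unitaryGroup (Fin m) ℂ) :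
    Matrix (Fin m) (Fin m) ℂ →⋆ₐ[ℂ] Matrix (Fin m) (Fin m) ℂ where
  toFun x := (U : Matrix (Fin m) (Fin m) ℂ) * x * star (U : Matrix (Fin m) (Fin m) ℂ)
  map_one' := by simpa using mem_unitaryGroup_iff.mp (SetLike.coe_mem U)
  map_mul' x y := by
    have h : star (U : Matrix (Fin m) (Fin m) ℂ) * (U : Matrix (Fin m) (Fin m) ℂ) = 1 :=
      mem_unitaryGroup_iff'.mp (SetLike.coe_mem U)
    simp only [mul_assoc]
    rw [← mul_assoc (star (U : Matrix (Fin m) (Fin m) ℂ)), h, one_mul]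
  map_zero' := by simp
  map_add' x y := by noncomm_ring
  commutes' c := by
    simp only [Algebra.algebraMap_eq_smul_one, Matrix.smul_mul, Matrix.mul_smul, mul_one]
    rw [mem_unitaryGroup_iff.mp (SetLike.coe_mem U)]
  map_star' x := by
    simp only [Matrix.star_mul, star_star, mul_assoc]

lemma mrpow_unitary_conj {M : Matrix (Fin m) (Fin m) ℂ} (hM : M.IsHermitian)
    (U : Matrix.unitaryGroup (Fin m) ℂ) (t : ℝ) :
    mrpow ((U : Matrix (Fin m) (Fin m) ℂ) * M * star (U : Matrix (Fin m) (Fin m) ℂ)) t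
      = (U : Matrix (Fin m) (Fin m) ℂ) * mrpow M t * star (U : Matrix (Fin m) (Fin m) ℂ) := by
  have hM' : ((U : Matrix (Fin m) (Fin m) ℂ) * M * star (U : Matrix (Fin m) (Fin m) ℂ)).IsHermitian := by
    have := isHermitian_conjTranspose_mul_mul ((U : Matrix (Fin m) (Fin m) ℂ))ᴴ hM
    simpa [star_eq_conjTranspose] using this
  rw [mrpow_eq_cfc hM, mrpow_eq_cfc hM']
  haveI : Finite (spectrum ℝ M) := by
    rw [hM.spectrum_real_eq_range_eigenvalues]
    exact Set.finite_range _
  haveI : CompactSpace (spectrum ℝ M) := Finite.compactSpace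
  have hcont : ContinuousOn (fun x : ℝ => x ^ t) (spectrum ℝ M) := by
    rw [continuousOn_iff_continuous_restrict]
    exact continuous_of_discreteTopology
  have hφ : Continuous (unitaryConj U) :=
    (continuous_const.matrix_mul continuous_id).matrix_mul continuous_const
  have := StarAlgHom.map_cfc (unitaryConj U) (fun x : ℝ => x ^ t) M hcont hφ hM hM'
  exact this.symm


theorem geomMean_conj {m : ℕ} (A B S : Matrix (Fin m) (Fin m) ℂ)
    (hA : A.PosDef) (hB : B.PosDef) (hS : IsUnit S)
    (t : ℝ) (ht : t ∈ Set.Icc (0:ℝ) 1) :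
    Sᴴ * geomMean t A B * S = geomMean t (Sᴴ * A * S) (Sᴴ * B * S) := by
  set C := Sᴴ * A * S with hCdef
  have hC : C.PosDef := posDef_conj hA hS
  set a := mrpow A (1/2) with hadef
  set a' := mrpow A (-(1/2)) with ha'def
  set c := mrpow C (1/2) with hcdef
  set c' := mrpow C (-(1/2)) with hc'def
  have ha : a.IsHermitian := mrpow_isHermitian hA.1 _
  have ha' : a'.IsHermitian := mrpow_isHermitian hA.1 _
  have hc : c.IsHermitian := mrpow_isHermitian hC.1 _
  have hc' : c'.IsHermitian := mrpow_isHermitian hC.1 _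
  have haa' : a * a' = 1 := by
    rw [hadef, ha'def, mrpow_mul_mrpow hA]; norm_num; exact mrpow_zero hA.1
  have ha'a : a' * a = 1 := by
    rw [hadef, ha'def, mrpow_mul_mrpow hA]; norm_num; exact mrpow_zero hA.1
  have haa : a * a = A := by
    rw [hadef, mrpow_mul_mrpow hA]; norm_num; exact mrpow_one hA.1
  have hcc' : c * c' = 1 := by
    rw [hcdef, hc'def, mrpow_mul_mrpow hC]; norm_num; exact mrpow_zero hC.1
  have hc'c : c' * c = 1 := by
    rw [hcdef, hc'def, mrpow_mul_mrpow hC]; norm_num; exact mrpow_zero hC.1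
  have hcc : c * c = C := by
    rw [hcdef, mrpow_mul_mrpow hC]; norm_num; exact mrpow_one hC.1
  -- the unitary
  set U₀ := c' * Sᴴ * a with hU0def
  have hstarU₀ : star U₀ = a * S * c' := by
    rw [hU0def, star_eq_conjTranspose]
    simp only [conjTranspose_mul, conjTranspose_conjTranspose, ha.eq, hc'.eq, mul_assoc]
  have hU : U₀ ∈ Matrix.unitaryGroup (Fin m) ℂ := by
    rw [mem_unitaryGroup_iff, hstarU₀, hU0def]
    have h1 : c' * Sᴴ * a * (a * S * c') = c' * (Sᴴ * (A * S)) * c' := by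
      rw [← haa]; simp only [mul_assoc]
    have h2 : Sᴴ * (A * S) = c * c := by
      rw [hcc, hCdef, mul_assoc]
    rw [h1, h2, ← mul_assoc, hc'c, one_mul, hcc']
  -- Hermitian middle matrix
  have hX : (a' * B * a').IsHermitian := by
    have := isHermitian_conjTranspose_mul_mul a' hB.1
    rwa [ha'.eq] at this
  -- key conjugation identity
  have key : mrpow (U₀ * (a' * B * a') * star U₀) t
      = U₀ * mrpow (a' * B * a') t * star U₀ := mrpow_unitary_conj hX ⟨U₀, hU⟩ t
  have hmid : U₀ * (a' * B * a') * star U₀ = c' * (Sᴴ * B * S) * c' := by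
    rw [hstarU₀, hU0def]
    calc c' * Sᴴ * a * (a' * B * a') * (a * S * c')
        = c' * (Sᴴ * ((a * a') * (B * ((a' * a) * S)))) * c' := by simp only [mul_assoc]
      _ = c' * (Sᴴ * B * S) * c' := by rw [haa', ha'a]; simp only [one_mul, mul_assoc]
  rw [geomMean, geomMean, ← hadef, ← ha'def, ← hcdef, ← hc'def, ← hmid, key, hstarU₀, hU0def]
  simp only [← mul_assoc]
  rw [hcc', one_mul, mul_assoc _ c' c, hc'c, mul_one]
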